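/- Let (S, j) be a soft inductive system of operator systems where each S_n is a C*-algebra. Then the following are equivalent: (a) n-wise products of j-convergent nets are j-convergent; (b) the connecting maps are asymptotically multiplicative, i.e., lim_m limsup_n ‖ j_{nm}((j_{ml} a)(j_{ml} b)) − (j_{nl} a)(j_{nl} b) ‖ = 0 for all l and a, b ∈ A_l. Moreover, either condition implies (c): the limit space A_∞, embedded in the quotient C*-algebra ℕets(A)/C_0(A), is closed under products. -/

import Mathlib

open Filter Topology

/-- Positivity of a matrix over a *-ring. -/
def MatPos {B : Type*} [NonUnitalSemiring B] [StarRing B] [PartialOrder B]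
    {κ : Type*} [Fintype κ] (x : κ → κ → B) : Prop :=
  ∀ v : κ → B, 0 ≤ ∑ i, ∑ j, star (v i) * x i j * v j

section CStar

variable {ι : Type*} [Preorder ι]
variable {A : ι → Type*} [∀ n, NormedRing (A n)] [∀ n, StarRing (A n)]
  [∀ n, CStarRing (A n)] [∀ n, NormedAlgebra ℂ (A n)] [∀ n, StarModule ℂ (A n)]
  [∀ n, PartialOrder (A n)] [∀ n, StarOrderedRing (A n)]

/-- A soft inductive system of operator systems whose spaces are the unital C*-algebras
`A n`: the connecting maps are ucp (unital, completely positive, contractive) and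
asymptotically transitive. -/
def IsSoftCSystem (j : ∀ n m, A m →ₗ[ℂ] A n) : Prop :=
  (∀ n m, m ≤ n → j n m 1 = 1) ∧
  (∀ n m, m ≤ n → ∀ (ν : ℕ) (x : Fin ν → Fin ν → A m),
    MatPos x → MatPos (fun i k => j n m (x i k))) ∧
  (∀ n m, m ≤ n → ∀ a : A m, ‖j n m a‖ ≤ ‖a‖) ∧
  ∀ (l : ι) (a : A l),
    Tendsto (fun m => limsup (fun n => ‖j n l a - j n m (j m l a)‖) atTop) atTop (𝓝 0)

/-- Uniformly bounded nets. -/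
def CBdd (a : ∀ n, A n) : Prop := ∃ C : ℝ, ∀ n, ‖a n‖ ≤ C

/-- Null nets. -/
def CNull (a : ∀ n, A n) : Prop := Tendsto (fun n => ‖a n‖) atTop (𝓝 0)

/-- j-convergent nets. -/
def CJConv (j : ∀ n m, A m →ₗ[ℂ] A n) (a : ∀ n, A n) : Prop :=
  Tendsto (fun m => limsup (fun n => ‖a n - j n m (a m)‖) atTop) atTop (𝓝 0)

end CStar

section Helpers

/-- A limsup of a nonnegative real function is nonnegative. -/
lemma limsup_nonneg_of_nonneg {ι : Type*} {l : Filter ι} [l.NeBot] {f : ι → ℝ}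
    (hf : ∀ n, 0 ≤ f n) : 0 ≤ limsup f l := by
  rw [Filter.limsup_eq]
  refine Real.sInf_nonneg fun a ha => ?_
  obtain ⟨n, hn⟩ := (ha : ∀ᶠ n in l, f n ≤ a).exists
  exact (hf n).trans hn

lemma tendsto_zero_of_forall_eps {ι : Type*} [Preorder ι] {F : ι → ℝ}
    (h0 : ∀ m, 0 ≤ F m) (h : ∀ ε > 0, ∀ᶠ m in atTop, F m ≤ ε) :
    Tendsto F atTop (𝓝 0) := by
  rw [Metric.tendsto_nhds]
  intro ε hε
  filter_upwards [h (ε / 2) (by positivity)] with m hm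
  rw [Real.dist_eq, sub_zero, abs_of_nonneg (h0 m)]
  linarith

lemma isBddU {ι : Type*} [Preorder ι] {f : ι → ℝ} {c : ℝ}
    (h : ∀ᶠ n in atTop, f n ≤ c) : IsBoundedUnder (· ≤ ·) (atTop : Filter ι) f :=
  ⟨c, eventually_map.2 h⟩

lemma norm_mul_sub_mul {E : Type*} [NormedRing E] (u u' v v' : E) :
    ‖u * v - u' * v'‖ ≤ ‖u - u'‖ * ‖v‖ + ‖u'‖ * ‖v - v'‖ := by
  have h : u * v - u' * v' = (u - u') * v + u' * (v - v') := by noncomm_ring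
  rw [h]
  exact (norm_add_le _ _).trans (add_le_add (norm_mul_le _ _) (norm_mul_le _ _))

variable {ι : Type*} [Preorder ι] [Nonempty ι] [IsDirected ι (· ≤ ·)]
variable {A : ι → Type*} [∀ n, NormedRing (A n)] [∀ n, StarRing (A n)]
  [∀ n, CStarRing (A n)] [∀ n, NormedAlgebra ℂ (A n)] [∀ n, StarModule ℂ (A n)]
  [∀ n, PartialOrder (A n)] [∀ n, StarOrderedRing (A n)]

/-- The hard direction (b) → (a): asymptotic multiplicativity of the connecting maps implies
that entrywise products of bounded j-convergent nets are j-convergent. -/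
lemma stmt19_b_to_a (j : ∀ n m, A m →ₗ[ℂ] A n)
    (hcon : ∀ n m, m ≤ n → ∀ a : A m, ‖j n m a‖ ≤ ‖a‖)
    (htrans : ∀ (l : ι) (a : A l),
      Tendsto (fun m => limsup (fun n => ‖j n l a - j n m (j m l a)‖) atTop) atTop (𝓝 0))
    (hb : ∀ (l : ι) (x y : A l),
        Tendsto (fun m => limsup
            (fun n => ‖j n m (j m l x * j m l y) - j n l x * j n l y‖) atTop)
          atTop (𝓝 0))
    (a b : ∀ n, A n) (ha : CBdd a) (hbd : CBdd b) (hca : CJConv j a) (hcb : CJConv j b) :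
    CJConv j (fun n => a n * b n) := by
  haveI : (atTop : Filter ι).NeBot := atTop_neBot_iff.mpr ⟨inferInstance, inferInstance⟩
  obtain ⟨Ca, hCa⟩ := ha
  obtain ⟨Cb, hCb⟩ := hbd
  set C : ℝ := max 1 (max Ca Cb) with hCdef
  have hC1 : (1 : ℝ) ≤ C := le_max_left _ _
  have hC0 : (0 : ℝ) < C := lt_of_lt_of_le one_pos hC1
  have hCa' : ∀ n, ‖a n‖ ≤ C := fun n =>
    (hCa n).trans ((le_max_left _ _).trans (le_max_right _ _))
  have hCb' : ∀ n, ‖b n‖ ≤ C := fun n =>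
    (hCb n).trans ((le_max_right _ _).trans (le_max_right _ _))
  refine tendsto_zero_of_forall_eps
    (fun m => limsup_nonneg_of_nonneg fun n => norm_nonneg _) ?_
  intro ε hε
  set δ : ℝ := ε / (9 * C) with hδdef
  have hδ0 : 0 < δ := by positivity
  have hδε : 9 * C * δ = ε := by
    rw [hδdef]
    field_simp
  -- choose the base index l
  obtain ⟨l, hal, hbl⟩ :=
    ((hca.eventually_lt_const hδ0).and (hcb.eventually_lt_const hδ0)).exists
  set x : A l := a l with hxdef
  set y : A l := b l with hydef
  have hxC : ‖x‖ ≤ C := hCa' l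
  have hyC : ‖y‖ ≤ C := hCb' l
  -- eventual (in m) closeness to the basic nets
  have hEm7 : ∀ᶠ m in atTop, ‖a m - j m l x‖ < δ := by
    refine eventually_lt_of_limsup_lt hal (isBddU (c := C + C) ?_)
    filter_upwards [eventually_ge_atTop l] with m hm
    calc ‖a m - j m l x‖ ≤ ‖a m‖ + ‖j m l x‖ := norm_sub_le _ _
      _ ≤ C + C := add_le_add (hCa' m) ((hcon m l hm x).trans hxC)
  have hEm8 : ∀ᶠ m in atTop, ‖b m - j m l y‖ < δ := by
    refine eventually_lt_of_limsup_lt hbl (isBddU (c := C + C) ?_)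
    filter_upwards [eventually_ge_atTop l] with m hm
    calc ‖b m - j m l y‖ ≤ ‖b m‖ + ‖j m l y‖ := norm_sub_le _ _
      _ ≤ C + C := add_le_add (hCb' m) ((hcon m l hm y).trans hyC)
  filter_upwards [eventually_ge_atTop l,
    hca.eventually_lt_const hδ0, hcb.eventually_lt_const hδ0,
    (htrans l x).eventually_lt_const hδ0, (htrans l y).eventually_lt_const hδ0,
    (hb l x y).eventually_lt_const hδ0, hEm7, hEm8]
    with m hml hm2 hm3 hm4 hm5 hm6 hm7 hm8
  -- now bound the limsup over n, for this fixed m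
  have hjx : ‖j m l x‖ ≤ C := (hcon m l hml x).trans hxC
  have hjy : ‖j m l y‖ ≤ C := (hcon m l hml y).trans hyC
  have hamC : ‖a m‖ ≤ C := hCa' m
  have hbmC : ‖b m‖ ≤ C := hCb' m
  -- eventual (in n) pointwise bounds obtained from the limsup bounds at this m
  have hEn1 : ∀ᶠ n in atTop, ‖a n - j n m (a m)‖ < δ := by
    refine eventually_lt_of_limsup_lt hm2 (isBddU (c := C + C) ?_)
    filter_upwards [eventually_ge_atTop m] with n hn
    calc ‖a n - j n m (a m)‖ ≤ ‖a n‖ + ‖j n m (a m)‖ := norm_sub_le _ _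
      _ ≤ C + C := add_le_add (hCa' n) ((hcon n m hn _).trans hamC)
  have hEn2 : ∀ᶠ n in atTop, ‖b n - j n m (b m)‖ < δ := by
    refine eventually_lt_of_limsup_lt hm3 (isBddU (c := C + C) ?_)
    filter_upwards [eventually_ge_atTop m] with n hn
    calc ‖b n - j n m (b m)‖ ≤ ‖b n‖ + ‖j n m (b m)‖ := norm_sub_le _ _
      _ ≤ C + C := add_le_add (hCb' n) ((hcon n m hn _).trans hbmC)
  have hEn3 : ∀ᶠ n in atTop, ‖j n l x - j n m (j m l x)‖ < δ := by
    refine eventually_lt_of_limsup_lt hm4 (isBddU (c := C + C) ?_)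
    filter_upwards [eventually_ge_atTop m, eventually_ge_atTop l] with n hnm hnl
    calc ‖j n l x - j n m (j m l x)‖ ≤ ‖j n l x‖ + ‖j n m (j m l x)‖ := norm_sub_le _ _
      _ ≤ C + C := add_le_add ((hcon n l hnl x).trans hxC) ((hcon n m hnm _).trans hjx)
  have hEn4 : ∀ᶠ n in atTop, ‖j n l y - j n m (j m l y)‖ < δ := by
    refine eventually_lt_of_limsup_lt hm5 (isBddU (c := C + C) ?_)
    filter_upwards [eventually_ge_atTop m, eventually_ge_atTop l] with n hnm hnl
    calc ‖j n l y - j n m (j m l y)‖ ≤ ‖j n l y‖ + ‖j n m (j m l y)‖ := norm_sub_le _ _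
      _ ≤ C + C := add_le_add ((hcon n l hnl y).trans hyC) ((hcon n m hnm _).trans hjy)
  have hEn5 : ∀ᶠ n in atTop, ‖j n m (j m l x * j m l y) - j n l x * j n l y‖ < δ := by
    refine eventually_lt_of_limsup_lt hm6 (isBddU (c := C * C + C * C) ?_)
    filter_upwards [eventually_ge_atTop m, eventually_ge_atTop l] with n hnm hnl
    have h1 : ‖j n m (j m l x * j m l y)‖ ≤ C * C :=
      (hcon n m hnm _).trans ((norm_mul_le _ _).trans
        (mul_le_mul hjx hjy (norm_nonneg _) (le_of_lt hC0)))
    have h2 : ‖j n l x * j n l y‖ ≤ C * C :=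
      (norm_mul_le _ _).trans (mul_le_mul ((hcon n l hnl x).trans hxC)
        ((hcon n l hnl y).trans hyC) (norm_nonneg _) (le_of_lt hC0))
    calc ‖j n m (j m l x * j m l y) - j n l x * j n l y‖
        ≤ ‖j n m (j m l x * j m l y)‖ + ‖j n l x * j n l y‖ := norm_sub_le _ _
      _ ≤ C * C + C * C := add_le_add h1 h2
  -- finish: pointwise bound eventually in n
  refine limsup_le_of_le (isCoboundedUnder_le_of_le atTop fun n => norm_nonneg _) ?_
  filter_upwards [eventually_ge_atTop m, eventually_ge_atTop l,
    hEn1, hEn2, hEn3, hEn4, hEn5] with n hnm hnl hn1 hn2 hn3 hn4 hn5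
  have key : a n * b n - j n m (a m * b m) =
      ((a n - j n m (a m)) * b n + j n m (a m) * (b n - j n m (b m)))
      + ((j n m (a m) * j n m (b m) - j n m (j m l x) * j n m (j m l y))
      + ((j n m (j m l x) * j n m (j m l y) - j n l x * j n l y)
      + ((j n l x * j n l y - j n m (j m l x * j m l y))
      + (j n m (j m l x * j m l y) - j n m (a m * b m))))) := by
    noncomm_ring
  have t1 : ‖(a n - j n m (a m)) * b n‖ ≤ δ * C :=
    (norm_mul_le _ _).trans
      (mul_le_mul (le_of_lt hn1) (hCb' n) (norm_nonneg _) (le_of_lt hδ0))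
  have t2 : ‖j n m (a m) * (b n - j n m (b m))‖ ≤ C * δ :=
    (norm_mul_le _ _).trans
      (mul_le_mul ((hcon n m hnm _).trans hamC) (le_of_lt hn2) (norm_nonneg _) (le_of_lt hC0))
  have t3 : ‖j n m (a m) * j n m (b m) - j n m (j m l x) * j n m (j m l y)‖ ≤ δ * C + C * δ := by
    refine (norm_mul_sub_mul _ _ _ _).trans (add_le_add ?_ ?_)
    · refine mul_le_mul ?_ ((hcon n m hnm _).trans hbmC) (norm_nonneg _) (le_of_lt hδ0)
      rw [← map_sub]
      exact (hcon n m hnm _).trans (le_of_lt hm7)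
    · refine mul_le_mul ((hcon n m hnm _).trans hjx) ?_ (norm_nonneg _) (le_of_lt hC0)
      rw [← map_sub]
      exact (hcon n m hnm _).trans (le_of_lt hm8)
  have t4 : ‖j n m (j m l x) * j n m (j m l y) - j n l x * j n l y‖ ≤ δ * C + C * δ := by
    refine (norm_mul_sub_mul _ _ _ _).trans (add_le_add ?_ ?_)
    · refine mul_le_mul ?_ ((hcon n m hnm _).trans hjy) (norm_nonneg _) (le_of_lt hδ0)
      rw [norm_sub_rev]
      exact le_of_lt hn3
    · exact mul_le_mul ((hcon n l hnl x).trans hxC)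
        (by rw [norm_sub_rev]; exact le_of_lt hn4) (norm_nonneg _) (le_of_lt hC0)
  have t5 : ‖j n l x * j n l y - j n m (j m l x * j m l y)‖ ≤ δ := by
    rw [norm_sub_rev]; exact le_of_lt hn5
  have t6 : ‖j n m (j m l x * j m l y) - j n m (a m * b m)‖ ≤ δ * C + C * δ := by
    rw [← map_sub]
    refine (hcon n m hnm _).trans ((norm_mul_sub_mul _ _ _ _).trans (add_le_add ?_ ?_))
    · exact mul_le_mul (by rw [norm_sub_rev]; exact le_of_lt hm7) hjy
        (norm_nonneg _) (le_of_lt hδ0)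
    · exact mul_le_mul hamC (by rw [norm_sub_rev]; exact le_of_lt hm8)
        (norm_nonneg _) (le_of_lt hC0)
  calc ‖a n * b n - j n m (a m * b m)‖
      ≤ ‖(a n - j n m (a m)) * b n + j n m (a m) * (b n - j n m (b m))‖
        + (‖j n m (a m) * j n m (b m) - j n m (j m l x) * j n m (j m l y)‖
        + (‖j n m (j m l x) * j n m (j m l y) - j n l x * j n l y‖
        + (‖j n l x * j n l y - j n m (j m l x * j m l y)‖
        + ‖j n m (j m l x * j m l y) - j n m (a m * b m)‖))) := by
        rw [key]
        exact (norm_add_le _ _).trans (add_le_add le_rfl (norm_add_le _ _ |>.trans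
          (add_le_add le_rfl ((norm_add_le _ _).trans
            (add_le_add le_rfl (norm_add_le _ _))))))
    _ ≤ (δ * C + C * δ) + ((δ * C + C * δ) + ((δ * C + C * δ) + (δ + (δ * C + C * δ)))) := by
        gcongr
        exact (norm_add_le _ _).trans (add_le_add t1 t2)
    _ ≤ 9 * C * δ := by nlinarith
    _ = ε := hδε

end Helpers

/-- For a soft inductive system of operator systems whose spaces are unital
C*-algebras, the following are equivalent: (a) entrywise products of j-convergent nets are
j-convergent; (b) the connecting maps are asymptotically multiplicative.  Moreover, either
condition implies (c): the limit space, inside the quotient C*-algebra `ℕets(A)/C₀(A)`, is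
closed under products, i.e. the entrywise product of two j-convergent nets agrees with a
j-convergent net up to a null net. -/
theorem stmt19 {ι : Type*} [Preorder ι] [Nonempty ι] [IsDirected ι (· ≤ ·)]
    {A : ι → Type*} [∀ n, NormedRing (A n)] [∀ n, StarRing (A n)]
    [∀ n, CStarRing (A n)] [∀ n, NormedAlgebra ℂ (A n)] [∀ n, StarModule ℂ (A n)]
    [∀ n, PartialOrder (A n)] [∀ n, StarOrderedRing (A n)]
    (j : ∀ n m, A m →ₗ[ℂ] A n) (hj : IsSoftCSystem j) :
    (((∀ a b : ∀ n, A n, CBdd a → CBdd b → CJConv j a → CJConv j b →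
        CJConv j (fun n => a n * b n)) ↔
      (∀ (l : ι) (x y : A l),
        Tendsto (fun m => limsup
            (fun n => ‖j n m (j m l x * j m l y) - j n l x * j n l y‖) atTop)
          atTop (𝓝 0)))) ∧
    ((∀ (l : ι) (x y : A l),
        Tendsto (fun m => limsup
            (fun n => ‖j n m (j m l x * j m l y) - j n l x * j n l y‖) atTop)
          atTop (𝓝 0)) →
      ∀ a b : ∀ n, A n, CBdd a → CBdd b → CJConv j a → CJConv j b →
        ∃ c : ∀ n, A n, CBdd c ∧ CJConv j c ∧ CNull (fun n => a n * b n - c n)) := by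
  classical
  obtain ⟨-, -, hcon, htrans⟩ := hj
  haveI : (atTop : Filter ι).NeBot := atTop_neBot_iff.mpr ⟨inferInstance, inferInstance⟩
  have main : (∀ a b : ∀ n, A n, CBdd a → CBdd b → CJConv j a → CJConv j b →
        CJConv j (fun n => a n * b n)) ↔
      (∀ (l : ι) (x y : A l),
        Tendsto (fun m => limsup
            (fun n => ‖j n m (j m l x * j m l y) - j n l x * j n l y‖) atTop)
          atTop (𝓝 0)) := by
    constructor
    · -- (a) → (b): apply (a) to the (truncated) basic nets generated by x and y
      intro hA l x y
      have basic : ∀ z : A l,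
          CBdd (fun n => if l ≤ n then j n l z else 0) ∧
          CJConv j (fun n => if l ≤ n then j n l z else 0) := by
        intro z
        constructor
        · refine ⟨‖z‖, fun n => ?_⟩
          by_cases h : l ≤ n
          · simpa [h] using hcon n l h z
          · simp [h]
        · refine (htrans l z).congr' ?_
          filter_upwards [eventually_ge_atTop l] with m hm
          refine limsup_congr ?_
          filter_upwards [eventually_ge_atTop l] with n hn
          simp [hn, hm]
      obtain ⟨hax, hcx⟩ := basic x
      obtain ⟨hay, hcy⟩ := basic y
      have hprod := hA _ _ hax hay hcx hcy
      refine hprod.congr' ?_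
      filter_upwards [eventually_ge_atTop l] with m hm
      refine limsup_congr ?_
      filter_upwards [eventually_ge_atTop l] with n hn
      simp only [hn, hm, if_pos]
      rw [norm_sub_rev]
    · intro hB a b ha hb hca hcb
      exact stmt19_b_to_a j hcon htrans hB a b ha hb hca hcb
  refine ⟨main, fun hB a b ha hb hca hcb => ?_⟩
  refine ⟨fun n => a n * b n, ?_, main.mpr hB a b ha hb hca hcb, ?_⟩
  · obtain ⟨Ca, hCa⟩ := ha
    obtain ⟨Cb, hCb⟩ := hb
    have hCa0 : 0 ≤ Ca := (norm_nonneg (a (Classical.arbitrary ι))).trans (hCa _)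
    exact ⟨Ca * Cb, fun n => (norm_mul_le _ _).trans
      (mul_le_mul (hCa n) (hCb n) (norm_nonneg _) hCa0)⟩
  · simp only [CNull, sub_self, norm_zero]
    exact tendsto_const_nhds
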